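/- Suppose P is a real homogeneous polynomial of degree d with r_ℂ(P) + r_ℝ(P) ≤ 3d - 1 and r_ℂ(P) ≠ r_ℝ(P). Let S_ℂ ⊂ ℙ^m(ℂ) evince r_ℂ(P) and S_ℝ ⊂ ℙ^m(ℝ) evince r_ℝ(P). Then the union S_ℂ ∪ S_ℝ fails to impose independent conditions on degree-d hypersurfaces: h^1(ℐ_{S_ℂ ∪ S_ℝ}(d)) > 0, i.e., the Veronese images ν_d(S_ℂ ∪ S_ℝ) are linearly dependent. -/

import Mathlib

open MvPolynomial

/-- The real linear form with coefficient vector `v`. -/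
noncomputable def linFormR {n : ℕ} (v : Fin n → ℝ) : MvPolynomial (Fin n) ℝ :=
  ∑ i, C (v i) * X i

/-- The complex linear form with coefficient vector `v`. -/
noncomputable def linFormC {n : ℕ} (v : Fin n → ℂ) : MvPolynomial (Fin n) ℂ :=
  ∑ i, C (v i) * X i

/-- The affine cone version of the real degree-`d` Veronese embedding. -/
noncomputable def nuR {n : ℕ} (d : ℕ) (p : Projectivization ℝ (Fin n → ℝ)) :
    MvPolynomial (Fin n) ℝ :=
  linFormR p.rep ^ d

/-- The affine cone version of the complex degree-`d` Veronese embedding. -/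
noncomputable def nuC {n : ℕ} (d : ℕ) (p : Projectivization ℂ (Fin n → ℂ)) :
    MvPolynomial (Fin n) ℂ :=
  linFormC p.rep ^ d

/-- The inclusion `ℙ^m(ℝ) ⊆ ℙ^m(ℂ)`. -/
noncomputable def toC {n : ℕ} (p : Projectivization ℝ (Fin n → ℝ)) :
    Projectivization ℂ (Fin n → ℂ) :=
  Projectivization.mk ℂ (fun i => (p.rep i : ℂ))
    (fun h => p.rep_nonzero (funext fun i => Complex.ofReal_eq_zero.mp (congrFun h i)))

/-- The real symmetric rank of `P` with respect to degree `d`. -/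
noncomputable def rRank {n : ℕ} (d : ℕ) (P : MvPolynomial (Fin n) ℝ) : ℕ :=
  sInf {r : ℕ | ∃ (c : Fin r → ℝ) (L : Fin r → MvPolynomial (Fin n) ℝ),
    (∀ i, c i ≠ 0) ∧ (∀ i, (L i).IsHomogeneous 1) ∧ P = ∑ i, c i • L i ^ d}

/-- The complex symmetric rank of `P` with respect to degree `d`. -/
noncomputable def cRank {n : ℕ} (d : ℕ) (P : MvPolynomial (Fin n) ℂ) : ℕ :=
  sInf {r : ℕ | ∃ (c : Fin r → ℂ) (L : Fin r → MvPolynomial (Fin n) ℂ),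
    (∀ i, c i ≠ 0) ∧ (∀ i, (L i).IsHomogeneous 1) ∧ P = ∑ i, c i • L i ^ d}

/- ### Auxiliary lemmas -/

lemma linFormC_isHomogeneous {n : ℕ} (v : Fin n → ℂ) : (linFormC v).IsHomogeneous 1 :=
  MvPolynomial.IsHomogeneous.sum _ _ _ fun i _ => MvPolynomial.isHomogeneous_C_mul_X (v i) i

lemma linFormR_isHomogeneous {n : ℕ} (v : Fin n → ℝ) : (linFormR v).IsHomogeneous 1 :=
  MvPolynomial.IsHomogeneous.sum _ _ _ fun i _ => MvPolynomial.isHomogeneous_C_mul_X (v i) i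

lemma linFormC_smul {n : ℕ} (c : ℂ) (v : Fin n → ℂ) :
    linFormC (c • v) = C c * linFormC v := by
  unfold linFormC
  rw [Finset.mul_sum]
  refine Finset.sum_congr rfl fun i _ => ?_
  simp [Pi.smul_apply, smul_eq_mul, map_mul, mul_assoc]

/-- `cRank` is at most the number of summands in any power-sum decomposition. -/
lemma cRank_le_of_sum {n d : ℕ} {ι : Type*} [DecidableEq ι] {P : MvPolynomial (Fin n) ℂ}
    (s : Finset ι) (c : ι → ℂ) (L : ι → MvPolynomial (Fin n) ℂ)
    (hL : ∀ i ∈ s, (L i).IsHomogeneous 1) (h : P = ∑ u ∈ s, c u • L u ^ d) :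
    cRank d P ≤ s.card := by
  classical
  set s' : Finset ι := s.filter (fun u => c u ≠ 0) with hs'
  have h' : P = ∑ u ∈ s', c u • L u ^ d := by
    rw [h, hs']
    refine (Finset.sum_filter_of_ne ?_).symm
    intro x _ hx hc
    exact hx (by rw [hc, zero_smul])
  have hcard : s'.card ≤ s.card := Finset.card_filter_le _ _
  refine le_trans (Nat.sInf_le ?_) hcard
  have e := s'.equivFin
  refine ⟨fun i => c (e.symm i).1, fun i => L (e.symm i).1, ?_, ?_, ?_⟩
  · intro i
    exact (Finset.mem_filter.mp (e.symm i).2).2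
  · intro i
    exact hL _ (Finset.mem_filter.mp (e.symm i).2).1
  · rw [h', ← Finset.sum_coe_sort s' (fun u => c u • L u ^ d)]
    exact (Equiv.sum_comp e.symm fun u : s' => c u.1 • L u.1 ^ d).symm

/-- `rRank` is at most the number of summands in any power-sum decomposition. -/
lemma rRank_le_of_sum {n d : ℕ} {ι : Type*} [DecidableEq ι] {P : MvPolynomial (Fin n) ℝ}
    (s : Finset ι) (c : ι → ℝ) (L : ι → MvPolynomial (Fin n) ℝ)
    (hL : ∀ i ∈ s, (L i).IsHomogeneous 1) (h : P = ∑ u ∈ s, c u • L u ^ d) :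
    rRank d P ≤ s.card := by
  classical
  set s' : Finset ι := s.filter (fun u => c u ≠ 0) with hs'
  have h' : P = ∑ u ∈ s', c u • L u ^ d := by
    rw [h, hs']
    refine (Finset.sum_filter_of_ne ?_).symm
    intro x _ hx hc
    exact hx (by rw [hc, zero_smul])
  have hcard : s'.card ≤ s.card := Finset.card_filter_le _ _
  refine le_trans (Nat.sInf_le ?_) hcard
  have e := s'.equivFin
  refine ⟨fun i => c (e.symm i).1, fun i => L (e.symm i).1, ?_, ?_, ?_⟩
  · intro i
    exact (Finset.mem_filter.mp (e.symm i).2).2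
  · intro i
    exact hL _ (Finset.mem_filter.mp (e.symm i).2).1
  · rw [h', ← Finset.sum_coe_sort s' (fun u => c u • L u ^ d)]
    exact (Equiv.sum_comp e.symm fun u : s' => c u.1 • L u.1 ^ d).symm

lemma map_nuR {n d : ℕ} (q : Projectivization ℝ (Fin n → ℝ)) :
    MvPolynomial.map (algebraMap ℝ ℂ) (nuR d q) = (linFormC fun i => (q.rep i : ℂ)) ^ d := by
  unfold nuR linFormR linFormC
  rw [map_pow, map_sum]
  congr 1
  refine Finset.sum_congr rfl fun i _ => ?_
  rw [map_mul, MvPolynomial.map_C, MvPolynomial.map_X]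
  norm_num

/-- The complex Veronese image of a real point is, up to a nonzero scalar, the
complexification of its real Veronese image. -/
lemma nuC_toC {n d : ℕ} (q : Projectivization ℝ (Fin n → ℝ)) :
    ∃ w : ℂˣ, nuC d (toC q) = (w : ℂ) • MvPolynomial.map (algebraMap ℝ ℂ) (nuR d q) := by
  obtain ⟨a, ha⟩ : ∃ a : ℂˣ, a • (fun i => (q.rep i : ℂ)) = (toC q).rep :=
    Projectivization.exists_smul_eq_mk_rep ℂ _ _
  refine ⟨a ^ d, ?_⟩
  have ha' : ((a : ℂ) • fun i => (q.rep i : ℂ)) = (toC q).rep := ha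
  rw [map_nuR]
  show linFormC (toC q).rep ^ d = _
  rw [← ha', linFormC_smul, mul_pow, ← map_pow, MvPolynomial.smul_eq_C_mul]
  norm_num

lemma toC_injective {n : ℕ} : Function.Injective (toC (n := n)) := by
  intro p q h
  unfold toC at h
  rw [Projectivization.mk_eq_mk_iff'] at h
  obtain ⟨a, ha⟩ := h
  obtain ⟨i₀, hi₀⟩ : ∃ i, q.rep i ≠ 0 := by
    by_contra hq
    push_neg at hq
    exact q.rep_nonzero (funext hq)
  set r : ℝ := p.rep i₀ / q.rep i₀ with hr
  have haq : a = (r : ℂ) := by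
    have h0 := congrFun ha i₀
    simp only [Pi.smul_apply, smul_eq_mul] at h0
    have hq' : ((q.rep i₀ : ℂ)) ≠ 0 := by exact_mod_cast hi₀
    rw [hr]
    push_cast
    rw [eq_div_iff hq']
    exact h0
  have hpr : p.rep = r • q.rep := by
    funext i
    have h0 := congrFun ha i
    simp only [Pi.smul_apply, smul_eq_mul, haq] at h0
    exact_mod_cast h0.symm
  have hrne : r ≠ 0 := by
    intro h0
    exact p.rep_nonzero (by rw [hpr, h0, zero_smul])
  rw [← Projectivization.mk_rep p, ← Projectivization.mk_rep q]
  exact (Projectivization.mk_eq_mk_iff' ℝ _ _ p.rep_nonzero q.rep_nonzero).mpr ⟨r, hpr.symm⟩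

/-- If the complexification of a real polynomial is a complex combination of
complexified real polynomials, the real parts of the coefficients give a real combination. -/
lemma eq_re_sum {n : ℕ} {ι : Type*} (P : MvPolynomial (Fin n) ℝ) (s : Finset ι)
    (z : ι → ℂ) (N : ι → MvPolynomial (Fin n) ℝ)
    (h : MvPolynomial.map (algebraMap ℝ ℂ) P = ∑ q ∈ s, z q • MvPolynomial.map (algebraMap ℝ ℂ) (N q)) :
    P = ∑ q ∈ s, (z q).re • N q := by
  ext mon
  have h2 := congrArg (fun Q => (MvPolynomial.coeff mon Q).re) h
  simp only [MvPolynomial.coeff_map, MvPolynomial.coeff_sum, MvPolynomial.coeff_smul,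
    smul_eq_mul, Complex.re_sum, Complex.mul_re, Complex.coe_algebraMap, Complex.ofReal_re,
    Complex.ofReal_im, mul_zero, sub_zero] at h2 ⊢
  exact h2

set_option maxHeartbeats 1600000 in
/-- If `P` is a real homogeneous polynomial of degree `d` with
`r_ℂ(P) + r_ℝ(P) ≤ 3d - 1` and `r_ℂ(P) ≠ r_ℝ(P)`, and `S_ℂ ⊂ ℙ^m(ℂ)`, `S_ℝ ⊂ ℙ^m(ℝ)`
evince `r_ℂ(P)` and `r_ℝ(P)` respectively, then the Veronese images of the points of
`S_ℂ ∪ S_ℝ` are linearly dependent, i.e. `h¹(𝓘_{S_ℂ ∪ S_ℝ}(d)) > 0`. -/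
theorem union_of_evincing_sets_dependent {m d : ℕ}
    (P : MvPolynomial (Fin (m + 1)) ℝ) (hP : P.IsHomogeneous d)
    (hsum : cRank d (MvPolynomial.map (algebraMap ℝ ℂ) P) + rRank d P ≤ 3 * d - 1)
    (hne : cRank d (MvPolynomial.map (algebraMap ℝ ℂ) P) ≠ rRank d P)
    (SC : Finset (Projectivization ℂ (Fin (m + 1) → ℂ)))
    (SR : Finset (Projectivization ℝ (Fin (m + 1) → ℝ)))
    (hSC : MvPolynomial.map (algebraMap ℝ ℂ) P ∈ Submodule.span ℂ (nuC d '' (SC : Set _)))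
    (hSCcard : SC.card = cRank d (MvPolynomial.map (algebraMap ℝ ℂ) P))
    (hSR : P ∈ Submodule.span ℝ (nuR d '' (SR : Set _)))
    (hSRcard : SR.card = rRank d P) :
    ¬ LinearIndependent ℂ
      (fun p : ↥((SC : Set (Projectivization ℂ (Fin (m + 1) → ℂ))) ∪ toC '' (SR : Set _)) =>
        nuC d p.1) := by
  classical
  intro hli
  set PC := MvPolynomial.map (algebraMap ℝ ℂ) P with hPCdef
  choose w hw using fun q : Projectivization ℝ (Fin (m + 1) → ℝ) => nuC_toC (d := d) q
  -- a representation supported on SC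
  obtain ⟨a, haSupp, haSum⟩ := (Finsupp.mem_span_image_iff_linearCombination ℂ).mp hSC
  -- a representation of P over SR
  obtain ⟨ρ, hρSupp, hρSum⟩ := (Finsupp.mem_span_image_iff_linearCombination ℝ).mp hSR
  -- PC lies in the span of the Veronese images of toC '' SR
  have hmem2 : PC ∈ Submodule.span ℂ (nuC d '' (toC '' (SR : Set _))) := by
    have hPsum : P = ∑ q ∈ ρ.support, ρ q • nuR d q := by
      rw [← hρSum, Finsupp.linearCombination_apply, Finsupp.sum]
    have hPCsum : PC = ∑ q ∈ ρ.support, ((ρ q : ℂ) * (w q : ℂ)⁻¹) • nuC d (toC q) := by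
      rw [hPCdef, hPsum, map_sum]
      refine Finset.sum_congr rfl fun q _ => ?_
      have h1 : MvPolynomial.map (algebraMap ℝ ℂ) (nuR d q)
          = (w q : ℂ)⁻¹ • nuC d (toC q) := by
        rw [hw q, smul_smul, inv_mul_cancel₀ (w q).ne_zero, one_smul]
      rw [MvPolynomial.smul_eq_C_mul, map_mul, MvPolynomial.map_C, h1,
        MvPolynomial.smul_eq_C_mul, MvPolynomial.smul_eq_C_mul, ← mul_assoc, ← map_mul]
      norm_num
    rw [hPCsum]
    refine Submodule.sum_mem _ fun q hq => Submodule.smul_mem _ _ (Submodule.subset_span ?_)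
    exact ⟨toC q, ⟨q, hρSupp hq, rfl⟩, rfl⟩
  obtain ⟨b, hbSupp, hbSum⟩ := (Finsupp.mem_span_image_iff_linearCombination ℂ).mp hmem2
  -- linear independence forces a = b
  have hli' : ∀ l ∈ Finsupp.supported ℂ ℂ
      ((SC : Set (Projectivization ℂ (Fin (m + 1) → ℂ))) ∪ toC '' (SR : Set _)),
      Finsupp.linearCombination ℂ (nuC d) l = 0 → l = 0 :=
    linearIndepOn_iff.mp hli
  have hab : a = b := by
    have hmem : a - b ∈ Finsupp.supported ℂ ℂ
        ((SC : Set (Projectivization ℂ (Fin (m + 1) → ℂ))) ∪ toC '' (SR : Set _)) :=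
      Submodule.sub_mem _ (Finsupp.supported_mono Set.subset_union_left haSupp)
        (Finsupp.supported_mono Set.subset_union_right hbSupp)
    have hz : Finsupp.linearCombination ℂ (nuC d) (a - b) = 0 := by
      rw [map_sub, haSum, hbSum, sub_self]
    exact sub_eq_zero.mp (hli' (a - b) hmem hz)
  have hsuppC : a.support ⊆ SC := by
    intro u hu
    exact haSupp hu
  have hsuppR : (a.support : Set _)
      ⊆ toC '' (SR : Set (Projectivization ℝ (Fin (m + 1) → ℝ))) := by
    rw [hab]
    exact hbSupp
  set T' : Finset (Projectivization ℝ (Fin (m + 1) → ℝ)) :=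
    SR.filter (fun q => toC q ∈ a.support) with hT'
  have himg : a.support = T'.image toC := by
    ext u
    constructor
    · intro hu
      obtain ⟨q, hq, rfl⟩ := hsuppR hu
      exact Finset.mem_image.mpr ⟨q, Finset.mem_filter.mpr ⟨hq, hu⟩, rfl⟩
    · intro hu
      obtain ⟨q, hq, rfl⟩ := Finset.mem_image.mp hu
      exact (Finset.mem_filter.mp hq).2
  have hcard : T'.card = a.support.card := by
    rw [himg, Finset.card_image_of_injective _ toC_injective]
  have hPCa : PC = ∑ u ∈ a.support, a u • nuC d u := by
    rw [← haSum, Finsupp.linearCombination_apply, Finsupp.sum]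
  -- complex rank bound
  have h1 : cRank d PC ≤ a.support.card :=
    cRank_le_of_sum a.support a (fun u => linFormC u.rep)
      (fun u _ => linFormC_isHomogeneous _) hPCa
  have h2 : a.support.card ≤ SC.card := Finset.card_le_card hsuppC
  -- real rank bound
  have hreal : PC = ∑ q ∈ T', (a (toC q) * (w q : ℂ)) • MvPolynomial.map (algebraMap ℝ ℂ) (nuR d q) := by
    rw [hPCa, himg, Finset.sum_image (fun x _ y _ h => toC_injective h)]
    refine Finset.sum_congr rfl fun q _ => ?_
    rw [hw q, smul_smul]
  have hPdecomp : P = ∑ q ∈ T', (a (toC q) * (w q : ℂ)).re • nuR d q :=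
    eq_re_sum P T' _ _ hreal
  have h3 : rRank d P ≤ T'.card :=
    rRank_le_of_sum T' _ (fun q => linFormR q.rep)
      (fun q _ => linFormR_isHomogeneous _) hPdecomp
  have h4 : T'.card ≤ SR.card := Finset.card_filter_le _ _
  omega
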